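/- Let n : ℕ, let V : ℝⁿ → ℝⁿ be a C² vector field and f : ℝⁿ → ℝ a function. Then V is mixed Killing with mixed Killing factor f (i.e. B(p) = f(p) • A(p) for all p) if and only if for every point p ∈ ℝⁿ and every vector Y ∈ ℝⁿ one has ⟨(fderiv ℝ (∇_V V) p) Y, Y⟩ + ‖DV(p) Y‖² = f(p) ⟨DV(p) Y, Y⟩. (This is the flat-space form of the paper's necessary and sufficient condition (e8), in which the curvature term g(R(Y,V)V,Y) vanishes.) -/

import Mathlib

open scoped RealInnerProductSpace

noncomputable section

/-- Euclidean space `ℝⁿ`. -/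
abbrev E (n : ℕ) := EuclideanSpace ℝ (Fin n)

/-- The field of symmetric operators representing the Lie derivative `L_V g` of the flat
metric: `A(p) = DV(p) + DV(p)*`. -/
def LieDerivOp {n : ℕ} (V : E n → E n) (p : E n) : E n →L[ℝ] E n :=
  fderiv ℝ V p + ContinuousLinearMap.adjoint (fderiv ℝ V p)

/-- The field of operators representing the second Lie derivative `L_V L_V g`:
`B(p) = (D_{V(p)} A) + A(p) ∘ DV(p) + DV(p)* ∘ A(p)`. -/
def LieDeriv2Op {n : ℕ} (V : E n → E n) (p : E n) : E n →L[ℝ] E n :=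
  fderiv ℝ (LieDerivOp V) p (V p)
    + (LieDerivOp V p).comp (fderiv ℝ V p)
    + (ContinuousLinearMap.adjoint (fderiv ℝ V p)).comp (LieDerivOp V p)

/-- `V` is a mixed Killing vector field with mixed Killing factor `f` if
`B(p) = f(p) • A(p)` for all `p`. -/
def IsMixedKilling {n : ℕ} (V : E n → E n) (f : E n → ℝ) : Prop :=
  ∀ p, LieDeriv2Op V p = f p • LieDerivOp V p

def adjL {n : ℕ} : (E n →L[ℝ] E n) →L[ℝ] (E n →L[ℝ] E n) :=
  LinearMap.mkContinuous
    { toFun := fun T => ContinuousLinearMap.adjoint T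
      map_add' := fun T S => by simp [map_add]
      map_smul' := fun c T => by simp }
    1 (fun T => by
      rw [one_mul]
      exact le_of_eq (LinearIsometryEquiv.norm_map ContinuousLinearMap.adjoint T))



@[simp] lemma adjL_apply {n : ℕ} (T : E n →L[ℝ] E n) :
    adjL T = ContinuousLinearMap.adjoint T := rfl

lemma symm_quad_zero {n : ℕ} {T : E n →L[ℝ] E n}
    (hT : ∀ x y, ⟪T x, y⟫ = ⟪x, T y⟫) (h : ∀ x, ⟪T x, x⟫ = 0) : T = 0 := by
  have hxy : ∀ x y, ⟪T x, y⟫ = 0 := by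
    intro x y
    have h1 := h (x + y)
    rw [map_add, inner_add_left, inner_add_right, inner_add_right, h x, h y] at h1
    have h2 : ⟪T y, x⟫ = ⟪T x, y⟫ := by rw [hT y x, real_inner_comm]
    linarith
  refine ContinuousLinearMap.ext fun x => ?_
  have h3 : T x = 0 := by
    rw [← @inner_self_eq_zero ℝ]
    exact hxy x (T x)
  simp [h3]


/-- the flat-space form of the necessary and sufficient condition (e8):
`V` is mixed Killing with factor `f` iff
`⟨(fderiv (∇_V V) p) Y, Y⟩ + ‖DV(p) Y‖² = f(p) ⟨DV(p) Y, Y⟩` for all `p, Y`. -/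
theorem isMixedKilling_iff {n : ℕ} (V : E n → E n) (hV : ContDiff ℝ 2 V)
    (f : E n → ℝ) :
    IsMixedKilling V f ↔
      ∀ (p Y : E n),
        ⟪fderiv ℝ (fun q => fderiv ℝ V q (V q)) p Y, Y⟫ + ‖fderiv ℝ V p Y‖ ^ 2 =
          f p * ⟪fderiv ℝ V p Y, Y⟫ := by
  have hVd : Differentiable ℝ V := hV.differentiable (by norm_num)
  have hD1 : ContDiff ℝ 1 (fderiv ℝ V) := hV.fderiv_right (by norm_num)
  unfold IsMixedKilling
  refine forall_congr' fun p => ?_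
  have hDd : DifferentiableAt ℝ (fderiv ℝ V) p := (hD1.differentiable one_ne_zero) p
  have hadj : HasFDerivAt (fun q => ContinuousLinearMap.adjoint (fderiv ℝ V q))
      (adjL.comp (fderiv ℝ (fderiv ℝ V) p)) p :=
    (adjL.hasFDerivAt).comp p hDd.hasFDerivAt
  have hAfd : fderiv ℝ (LieDerivOp V) p
      = fderiv ℝ (fderiv ℝ V) p + adjL.comp (fderiv ℝ (fderiv ℝ V) p) :=
    (hDd.hasFDerivAt.add hadj).fderiv
  have hsymm : ∀ v w, fderiv ℝ (fderiv ℝ V) p v w = fderiv ℝ (fderiv ℝ V) p w v :=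
    fun v w => (hV.contDiffAt.isSymmSndFDerivAt (by simp [minSmoothness_of_isRCLikeNormedField])) v w
  have hgrad : fderiv ℝ (fun q => fderiv ℝ V q (V q)) p
      = (fderiv ℝ V p).comp (fderiv ℝ V p) + (fderiv ℝ (fderiv ℝ V) p).flip (V p) :=
    fderiv_clm_apply hDd (hVd p)
  have hgradY : ∀ Y, fderiv ℝ (fun q => fderiv ℝ V q (V q)) p Y
      = fderiv ℝ V p (fderiv ℝ V p Y) + fderiv ℝ (fderiv ℝ V) p (V p) Y := by
    intro Y
    rw [hgrad]
    simp [hsymm Y (V p)]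
  set M : E n →L[ℝ] E n := fderiv ℝ (fderiv ℝ V) p (V p) with hM
  set D : E n →L[ℝ] E n := fderiv ℝ V p with hDdef
  set T := LieDeriv2Op V p - f p • LieDerivOp V p with hTdef
  have hTapp : ∀ x y, ⟪T x, y⟫ =
      ⟪M x, y⟫ + ⟪x, M y⟫ + ⟪D (D x), y⟫ + 2 * ⟪D x, D y⟫ + ⟪x, D (D y)⟫
        - f p * (⟪D x, y⟫ + ⟪x, D y⟫) := by
    intro x y
    simp only [hTdef, LieDeriv2Op, LieDerivOp, hAfd, ← hDdef, ← hM,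
      ContinuousLinearMap.sub_apply, ContinuousLinearMap.add_apply,
      ContinuousLinearMap.smul_apply, ContinuousLinearMap.comp_apply, adjL_apply,
      map_add, inner_sub_left, inner_add_left, inner_add_right, real_inner_smul_left,
      ContinuousLinearMap.adjoint_inner_left]
    ring
  have hTsymm : ∀ x y, ⟪T x, y⟫ = ⟪x, T y⟫ := by
    intro x y
    rw [real_inner_comm (T y) x, hTapp x y, hTapp y x,
      real_inner_comm y (M x), real_inner_comm (M y) x, real_inner_comm y (D (D x)),
      real_inner_comm (D y) (D x), real_inner_comm (D (D y)) x, real_inner_comm y (D x),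
      real_inner_comm (D y) x]
    ring
  have hquad : ∀ Y, ⟪T Y, Y⟫ =
      2 * (⟪fderiv ℝ (fun q => fderiv ℝ V q (V q)) p Y, Y⟫ + ‖D Y‖ ^ 2
        - f p * ⟪D Y, Y⟫) := by
    intro Y
    rw [hTapp Y Y, hgradY Y, inner_add_left, ← real_inner_self_eq_norm_sq,
      real_inner_comm (M Y) Y, real_inner_comm (D (D Y)) Y, real_inner_comm (D Y) Y]
    ring
  constructor
  · intro hB Y
    have h0 : ⟪T Y, Y⟫ = 0 := by rw [hTdef, hB, sub_self]; simp
    have h1 := hquad Y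
    rw [h0] at h1
    linarith
  · intro h
    have hT0 : T = 0 := symm_quad_zero hTsymm (fun Y => by
      rw [hquad Y]
      have := h Y
      linarith)
    rwa [hTdef, sub_eq_zero] at hT0
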